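/- arXiv:math/9401225 — 2 statements merged into one kernel-verified Lean document; each statement's English description precedes it below -/
import Mathlib

section
/- Let j ⊂ t be bounded intervals with components l, r of t \ j, and suppose a map f sends l, j, r, t homeomorphically onto intervals L, J, R, T with |l|,|r|,|L|,|R| > 0. If B(f,t,j) := (|T|·|J|·|l|·|r|)/(|t|·|j|·|L|·|R|) ≥ Ω and j is shrunk to a single point {x} at the right endpoint of l at which f is differentiable, then in the limit one obtains |f'(x)| ≥ Ω · (|L|/|l|) · (|R|/|T|). -/
open Filter Topology Set

theorem deriv_lower_bound_from_cross_ratio (f : ℝ → ℝ) (p x s Ω d : ℝ)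
    (hpx : p < x) (hxs : x < s) (hΩ : 0 < Ω)
    (hmono : StrictMonoOn f (Set.Icc p s))
    (hd : HasDerivAt f d x)
    (hB : ∀ y, x < y → y < s →
      Ω ≤ ((f s - f p) * (f y - f x) * (x - p) * (s - y)) /
          ((s - p) * (y - x) * (f x - f p) * (f s - f y))) :
    |d| ≥ Ω * ((f x - f p) / (x - p)) * ((f s - f x) / (f s - f p)) := by
  have hps : p < s := hpx.trans hxs
  have hxm : x ∈ Set.Icc p s := ⟨hpx.le, hxs.le⟩
  have hpm : p ∈ Set.Icc p s := ⟨le_refl _, hps.le⟩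
  have hsm : s ∈ Set.Icc p s := ⟨hps.le, le_refl _⟩
  have hA : 0 < f x - f p := sub_pos.mpr (hmono hpm hxm hpx)
  have hBv : 0 < f s - f x := sub_pos.mpr (hmono hxm hsm hxs)
  have hC : 0 < f s - f p := sub_pos.mpr (hmono hpm hsm hps)
  have hu : 0 < x - p := sub_pos.mpr hpx
  have hv : 0 < s - x := sub_pos.mpr hxs
  have hw : 0 < s - p := sub_pos.mpr hps
  -- slope tendsto
  have h1 : Tendsto (fun y => (f y - f x) / (y - x)) (𝓝[>] x) (𝓝 d) := by
    have := (hasDerivAt_iff_tendsto_slope.mp hd).mono_left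
      (nhdsWithin_mono x (fun y hy => ne_of_gt hy))
    refine this.congr (fun y => ?_)
    simp [slope_def_field]
  have h2 : Tendsto f (𝓝[>] x) (𝓝 (f x)) :=
    hd.continuousAt.continuousWithinAt
  have h3 : Tendsto (fun y => (s - y) / (f s - f y)) (𝓝[>] x)
      (𝓝 ((s - x) / (f s - f x))) := by
    exact Tendsto.div
      (tendsto_const_nhds.sub (tendsto_id.mono_left nhdsWithin_le_nhds))
      (tendsto_const_nhds.sub h2) (ne_of_gt hBv)
  set c : ℝ := ((f s - f p) * (x - p)) / ((s - p) * (f x - f p)) with hc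
  have h4 : Tendsto (fun y => c * ((f y - f x) / (y - x)) * ((s - y) / (f s - f y)))
      (𝓝[>] x) (𝓝 (c * d * ((s - x) / (f s - f x)))) :=
    (tendsto_const_nhds.mul h1).mul h3
  have hmem : Set.Ioo x s ∈ 𝓝[>] x := Ioo_mem_nhdsGT_of_mem ⟨le_refl _, hxs⟩
  have heq : ∀ᶠ y in 𝓝[>] x,
      c * ((f y - f x) / (y - x)) * ((s - y) / (f s - f y)) =
      ((f s - f p) * (f y - f x) * (x - p) * (s - y)) /
        ((s - p) * (y - x) * (f x - f p) * (f s - f y)) := by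
    filter_upwards [hmem] with y hy
    have hyx : y - x ≠ 0 := ne_of_gt (sub_pos.mpr hy.1)
    have hfsy : f s - f y ≠ 0 := ne_of_gt (sub_pos.mpr
      (hmono ⟨hpx.le.trans hy.1.le, hy.2.le⟩ hsm hy.2))
    rw [hc]
    field_simp
  have h5 : Tendsto (fun y =>
      ((f s - f p) * (f y - f x) * (x - p) * (s - y)) /
        ((s - p) * (y - x) * (f x - f p) * (f s - f y)))
      (𝓝[>] x) (𝓝 (c * d * ((s - x) / (f s - f x)))) :=
    h4.congr' heq
  have hlim : Ω ≤ c * d * ((s - x) / (f s - f x)) := by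
    refine ge_of_tendsto h5 ?_
    filter_upwards [hmem] with y hy using hB y hy.1 hy.2
  -- algebra
  have hkey : Ω ≤ (f s - f p) * (x - p) * d * (s - x) /
      ((s - p) * (f x - f p) * (f s - f x)) := by
    rw [hc] at hlim
    calc Ω ≤ _ := hlim
    _ = _ := by field_simp
  have hd0 : 0 < d := by
    by_contra h
    push_neg at h
    have : (f s - f p) * (x - p) * d * (s - x) /
        ((s - p) * (f x - f p) * (f s - f x)) ≤ 0 := by
      apply div_nonpos_of_nonpos_of_nonneg
      · nlinarith [mul_pos (mul_pos hC hu) hv]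
      · positivity
    linarith
  have hkey2 : Ω * ((s - p) * (f x - f p) * (f s - f x)) ≤
      (f s - f p) * (x - p) * d * (s - x) := (le_div_iff₀ (by positivity)).mp hkey
  rw [abs_of_pos hd0, ge_iff_le]
  have ht : Ω * ((f x - f p) / (x - p)) * ((f s - f x) / (f s - f p)) =
      Ω * (f x - f p) * (f s - f x) / ((x - p) * (f s - f p)) := by
    field_simp
  rw [ht, div_le_iff₀ (by positivity)]
  nlinarith [hkey2, mul_pos (mul_pos hΩ hA) hBv, hv,
    mul_nonneg (mul_pos (mul_pos hΩ hA) hBv).le (by linarith : (0:ℝ) ≤ (s - p) - (s - x))]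
end

section
/- Let f : ℝ → ℝ be three times continuously differentiable on an open interval t with f' > 0 on t, and suppose the Schwarzian derivative Sf = f'''/f' − (3/2)(f''/f')² is ≤ 0 on t. Then for every subinterval j ⊂ t whose complement t \ j has two components l, r of positive length, the cross-ratio distortion satisfies B(f,t,j) = (|f(t)|·|f(j)|·|l|·|r|)/(|t|·|j|·|f(l)|·|f(r)|) ≥ 1. -/
open Set Real

lemma convex_H (f : ℝ → ℝ) (p s cc dd : ℝ)
    (hC : ContDiffOn ℝ 3 f (Set.Icc p s))
    (hpos : ∀ x ∈ Set.Icc p s, 0 < deriv f x)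
    (hS : ∀ x ∈ Set.Ioo p s,
      deriv (deriv (deriv f)) x / deriv f x
        - (3 / 2) * (deriv (deriv f) x / deriv f x) ^ 2 ≤ 0)
    (hu : ∀ x ∈ Set.Ioo p s, 0 < -(cc * f x + dd)) :
    ConvexOn ℝ (Set.Ioo p s) (fun x => -(cc * f x + dd) / Real.sqrt (deriv f x)) := by
  set f1 := deriv f with hf1def
  set f2 := deriv f1 with hf2def
  set f3 := deriv f2 with hf3def
  have hO : IsOpen (Ioo p s) := isOpen_Ioo
  have hC' : ContDiffOn ℝ 3 f (Ioo p s) := hC.mono Ioo_subset_Icc_self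
  have hC1 : ContDiffOn ℝ 2 f1 (Ioo p s) := by
    have := hC'.deriv_of_isOpen hO (m := 2) (by norm_num)
    simpa using this
  have hC2 : ContDiffOn ℝ 1 f2 (Ioo p s) := by
    have := hC1.deriv_of_isOpen hO (m := 1) (by norm_num)
    simpa using this
  have hdf : ∀ x ∈ Ioo p s, HasDerivAt f (f1 x) x := fun x hx =>
    ((hC'.differentiableOn (by norm_num)).differentiableAt (hO.mem_nhds hx)).hasDerivAt
  have hdf1 : ∀ x ∈ Ioo p s, HasDerivAt f1 (f2 x) x := fun x hx =>
    ((hC1.differentiableOn (by norm_num)).differentiableAt (hO.mem_nhds hx)).hasDerivAt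
  have hdf2 : ∀ x ∈ Ioo p s, HasDerivAt f2 (f3 x) x := fun x hx =>
    ((hC2.differentiableOn (by norm_num)).differentiableAt (hO.mem_nhds hx)).hasDerivAt
  have hf1pos : ∀ x ∈ Ioo p s, 0 < f1 x := fun x hx => hpos x (Ioo_subset_Icc_self hx)
  set v : ℝ → ℝ := fun y => (Real.sqrt (f1 y))⁻¹ with hvdef
  set v1 : ℝ → ℝ := fun y => -(f2 y) / (2 * f1 y * Real.sqrt (f1 y)) with hv1def
  set v2 : ℝ → ℝ := fun y => (3 * (f2 y)^2 - 2 * f1 y * f3 y) / (4 * f1 y ^ 2 * Real.sqrt (f1 y))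
    with hv2def
  set u : ℝ → ℝ := fun y => -(cc * f y + dd) with hudef
  have hv : ∀ x ∈ Ioo p s, HasDerivAt v (v1 x) x := by
    intro x hx
    have hx1 := hf1pos x hx
    have hs0 : 0 < Real.sqrt (f1 x) := Real.sqrt_pos.2 hx1
    have hsq : HasDerivAt (fun y => Real.sqrt (f1 y)) (f2 x / (2 * Real.sqrt (f1 x))) x :=
      (hdf1 x hx).sqrt (ne_of_gt hx1)
    have := hsq.inv (ne_of_gt hs0)
    refine this.congr_deriv (Eq.symm ?_)
    have h2 : Real.sqrt (f1 x) ^ 2 = f1 x := Real.sq_sqrt hx1.le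
    simp only [hv1def]
    rw [h2]
    have h0 : Real.sqrt (f1 x) ≠ 0 := ne_of_gt hs0
    field_simp
  have hv1 : ∀ x ∈ Ioo p s, HasDerivAt v1 (v2 x) x := by
    intro x hx
    have hx1 := hf1pos x hx
    have hs0 : 0 < Real.sqrt (f1 x) := Real.sqrt_pos.2 hx1
    have hsq : HasDerivAt (fun y => Real.sqrt (f1 y)) (f2 x / (2 * Real.sqrt (f1 x))) x :=
      (hdf1 x hx).sqrt (ne_of_gt hx1)
    have hden : HasDerivAt (fun y => 2 * f1 y * Real.sqrt (f1 y))
        (2 * f2 x * Real.sqrt (f1 x) + 2 * f1 x * (f2 x / (2 * Real.sqrt (f1 x)))) x :=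
      (((hdf1 x hx).const_mul 2).mul hsq)
    have hdenne : 2 * f1 x * Real.sqrt (f1 x) ≠ 0 := by positivity
    have := ((hdf2 x hx).neg).div hden hdenne
    refine this.congr_deriv (Eq.symm ?_)
    have hsq2 : Real.sqrt (f1 x) ^ 2 = f1 x := Real.sq_sqrt hx1.le
    simp only [hv2def, Pi.neg_apply]
    field_simp
    linear_combination (4 * f2 x ^ 2) * hsq2
  have hu' : ∀ x ∈ Ioo p s, HasDerivAt u (-(cc * f1 x)) x := fun x hx =>
    (((hdf x hx).const_mul cc).add_const dd).neg
  have hH : ∀ x ∈ Ioo p s,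
      HasDerivAt (fun y => u y * v y) (-(cc * f1 x) * v x + u x * v1 x) x := fun x hx =>
    (hu' x hx).mul (hv x hx)
  have hH1 : ∀ x ∈ Ioo p s,
      HasDerivAt (fun y => -(cc * f1 y) * v y + u y * v1 y)
        ((-(cc * f2 x) * v x + -(cc * f1 x) * v1 x) + (-(cc * f1 x) * v1 x + u x * v2 x)) x := by
    intro x hx
    exact ((((hdf1 x hx).const_mul cc).neg).mul (hv x hx)).add ((hu' x hx).mul (hv1 x hx))
  have hH2nonneg : ∀ x ∈ Ioo p s,
      0 ≤ (-(cc * f2 x) * v x + -(cc * f1 x) * v1 x) + (-(cc * f1 x) * v1 x + u x * v2 x) := by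
    intro x hx
    have hx1 := hf1pos x hx
    have hs0 : 0 < Real.sqrt (f1 x) := Real.sqrt_pos.2 hx1
    have hsq2 : Real.sqrt (f1 x) ^ 2 = f1 x := Real.sq_sqrt hx1.le
    have hcancel : (-(cc * f2 x) * v x + -(cc * f1 x) * v1 x) + -(cc * f1 x) * v1 x = 0 := by
      simp only [hvdef, hv1def]
      have h0 : Real.sqrt (f1 x) ≠ 0 := ne_of_gt hs0
      field_simp
      ring
    have hkey : 2 * f1 x * f3 x ≤ 3 * f2 x ^ 2 := by
      have h := hS x hx
      have h2 : (f3 x / f1 x - 3 / 2 * (f2 x / f1 x) ^ 2) * f1 x ^ 2 ≤ 0 :=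
        mul_nonpos_of_nonpos_of_nonneg h (by positivity)
      have h3 : (f3 x / f1 x - 3 / 2 * (f2 x / f1 x) ^ 2) * f1 x ^ 2
          = f3 x * f1 x - 3 / 2 * f2 x ^ 2 := by field_simp
      nlinarith
    have hv2nonneg : 0 ≤ v2 x := by
      simp only [hv2def]
      apply div_nonneg (by linarith) (by positivity)
    have hux : 0 < u x := hu x hx
    nlinarith [mul_nonneg hux.le hv2nonneg]
  have goal_eq : (fun x => -(cc * f x + dd) / Real.sqrt (f1 x)) = fun y => u y * v y := by
    funext y; simp [hudef, hvdef, div_eq_mul_inv]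
  rw [goal_eq]
  apply convexOn_of_hasDerivWithinAt2_nonneg (convex_Ioo p s)
    (f' := fun x => -(cc * f1 x) * v x + u x * v1 x)
    (f'' := fun x => (-(cc * f2 x) * v x + -(cc * f1 x) * v1 x) + (-(cc * f1 x) * v1 x + u x * v2 x))
  · exact fun x hx => (hH x hx).continuousAt.continuousWithinAt
  · intro x hx
    rw [interior_Ioo] at hx ⊢
    exact (hH x hx).hasDerivWithinAt
  · intro x hx
    rw [interior_Ioo] at hx ⊢
    exact (hH1 x hx).hasDerivWithinAt
  · intro x hx
    rw [interior_Ioo] at hx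
    exact hH2nonneg x hx

lemma aux_fin {Q R S GR : ℝ} (h1 : R ≤ GR) (h2 : Q < R) (h3 : R < S) :
    (R - Q) * (S - GR) ≤ (GR - Q) * (S - R) := by nlinarith

lemma aux_main {FP FQ FR FS GR P Q R S DP DQ DR DS DL : ℝ}
    (e1 : FS - FP = (S - P) * (DP * DS) / DL)
    (e2 : FR - FQ = (GR - Q) * (DQ * DR) / DL)
    (e3 : FQ - FP = (Q - P) * (DP * DQ) / DL)
    (e4 : FS - FR = (S - GR) * (DR * DS) / DL)
    (hDL : DL ≠ 0) (hDP : DP ≠ 0) (hDQ : DQ ≠ 0) (hDR : DR ≠ 0) (hDS : DS ≠ 0)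
    (h1 : S - P ≠ 0) (h2 : R - Q ≠ 0) (h3 : Q - P ≠ 0) (h4 : S - GR ≠ 0) :
    ((FS - FP) * (FR - FQ) * (Q - P) * (S - R)) /
        ((S - P) * (R - Q) * (FQ - FP) * (FS - FR))
      = ((GR - Q) * (S - R)) / ((R - Q) * (S - GR)) := by
  rw [e1, e2, e3, e4]
  field_simp


lemma aux_ge_one {A a d sd : ℝ} (h : A ^ 2 * a = d) (hA : 0 < A) (hle : A ≤ sd)
    (hsq : sd ^ 2 = d) : 1 ≤ a := by
  nlinarith [mul_self_le_mul_self hA.le hle, pow_pos hA 2]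

lemma aux_le_one {A a d sd : ℝ} (h : A ^ 2 * a = d) (hA : 0 < A) (hge : sd ≤ A)
    (hsd : 0 < sd) (hsq : sd ^ 2 = d) : a ≤ 1 := by
  nlinarith [mul_self_le_mul_self hsd.le hge, pow_pos hA 2]

lemma aux_right_ge {S : Set ℝ} {h : ℝ → ℝ} (hc : ConvexOn ℝ S h) {x y z c : ℝ}
    (hx : x ∈ S) (hz : z ∈ S) (hxy : x < y) (hyz : y < z)
    (hhx : h x = c) (hhy : h y = c) : c ≤ h z := by
  have hd : 0 < z - x := by linarith
  have ha : (0:ℝ) ≤ (z - y) / (z - x) := div_nonneg (by linarith) hd.le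
  have hb : (0:ℝ) < (y - x) / (z - x) := div_pos (by linarith) hd
  have hab : (z - y) / (z - x) + (y - x) / (z - x) = 1 := by field_simp; ring
  have key := hc.2 hx hz ha hb.le hab
  simp only [smul_eq_mul] at key
  have hyy : (z - y) / (z - x) * x + (y - x) / (z - x) * z = y := by field_simp; ring
  rw [hyy, hhy, hhx] at key
  by_contra hcon
  push_neg at hcon
  have h2 : (y - x) / (z - x) * h z < (y - x) / (z - x) * c :=
    mul_lt_mul_of_pos_left hcon hb
  have h3 : (z - y) / (z - x) * c + (y - x) / (z - x) * c = c := by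
    rw [← add_mul, hab, one_mul]
  linarith

set_option maxHeartbeats 1000000 in
theorem cross_ratio_expanded_of_schwarzian_nonpos (f : ℝ → ℝ) (p q r s : ℝ)
    (hpq : p < q) (hqr : q < r) (hrs : r < s)
    (hC : ContDiffOn ℝ 3 f (Set.Icc p s))
    (hpos : ∀ x ∈ Set.Icc p s, 0 < deriv f x)
    (hS : ∀ x ∈ Set.Ioo p s,
      deriv (deriv (deriv f)) x / deriv f x
        - (3 / 2) * (deriv (deriv f) x / deriv f x) ^ 2 ≤ 0) :
    1 ≤ ((f s - f p) * (f r - f q) * (q - p) * (s - r)) /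
        ((s - p) * (r - q) * (f q - f p) * (f s - f r)) := by
  have hps : p < s := hpq.trans (hqr.trans hrs)
  have hqs : q < s := hqr.trans hrs
  have hpr : p < r := hpq.trans hqr
  have hmono : StrictMonoOn f (Icc p s) := by
    apply strictMonoOn_of_deriv_pos (convex_Icc p s) hC.continuousOn
    intro x hx
    rw [interior_Icc] at hx
    exact hpos x (Ioo_subset_Icc_self hx)
  have hpm : p ∈ Icc p s := ⟨le_refl p, hps.le⟩
  have hqm : q ∈ Icc p s := ⟨hpq.le, hqs.le⟩
  have hrm : r ∈ Icc p s := ⟨hpr.le, hrs.le⟩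
  have hsm : s ∈ Icc p s := ⟨hps.le, le_refl s⟩
  have hfpq : f p < f q := hmono hpm hqm hpq
  have hfqr : f q < f r := hmono hqm hrm hqr
  have hfrs : f r < f s := hmono hrm hsm hrs
  have hfps : f p < f s := hfpq.trans (hfqr.trans hfrs)
  have hfqs : f q < f s := hfqr.trans hfrs
  have hfpr : f p < f r := hfpq.trans hfqr
  set k : ℝ := ((f q - f s) * (q - p)) / ((f q - f p) * (q - s)) with hkdef
  have hkpos : 0 < k := by
    apply div_pos_of_neg_of_neg <;> nlinarith
  have hk : k * ((f q - f p) * (q - s)) = (f q - f s) * (q - p) := by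
    rw [hkdef]
    rw [div_mul_eq_mul_div, mul_div_assoc]
    rw [div_self (by nlinarith : (f q - f p) * (q - s) ≠ 0), mul_one]
  set cc : ℝ := 1 - k with hccdef
  set dd : ℝ := -(f s) + k * f p with hdddef
  set aa : ℝ := p - s * k with haadef
  set bb : ℝ := -(p * f s) + s * k * f p with hbbdef
  set dl : ℝ := k * (s - p) * (f s - f p) with hdldef
  have hdlpos : 0 < dl := by
    rw [hdldef]
    have h1 : 0 < s - p := by linarith
    have h2 : 0 < f s - f p := by linarith
    positivity
  -- denominator negativity
  have hDneg : ∀ y ∈ Icc (f p) (f s), cc * y + dd < 0 := by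
    intro y hy
    have hid : (f s - f p) * (cc * y + dd)
        = (f s - y) * (f p - f s) + (y - f p) * (k * (f p - f s)) := by
      rw [hccdef, hdddef]; ring
    nlinarith [hy.1, hy.2, mul_nonneg (sub_nonneg.2 hy.2) (sub_pos.2 hfps).le,
      mul_nonneg (mul_nonneg (sub_nonneg.2 hy.1) hkpos.le) (sub_pos.2 hfps).le,
      mul_pos hkpos (sub_pos.2 hfps)]
  have hfmem : ∀ x ∈ Icc p s, f x ∈ Icc (f p) (f s) := fun x hx =>
    ⟨hmono.monotoneOn hpm hx hx.1, hmono.monotoneOn hx hsm hx.2⟩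
  have hDp := hDneg (f p) (hfmem p hpm)
  have hDq := hDneg (f q) (hfmem q hqm)
  have hDr := hDneg (f r) (hfmem r hrm)
  have hDs := hDneg (f s) (hfmem s hsm)
  set g : ℝ → ℝ := fun x => (aa * f x + bb) / (cc * f x + dd) with hgdef
  have hgp : g p = p := by
    rw [hgdef]
    rw [div_eq_iff (ne_of_lt hDp)]
    rw [haadef, hbbdef, hccdef, hdddef]; ring
  have hgs : g s = s := by
    rw [hgdef]
    rw [div_eq_iff (ne_of_lt hDs)]
    rw [haadef, hbbdef, hccdef, hdddef]; ring
  have hgq : g q = q := by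
    rw [hgdef]
    rw [div_eq_iff (ne_of_lt hDq)]
    rw [haadef, hbbdef, hccdef, hdddef]
    linear_combination hk
  -- difference identity
  have hMdiff : ∀ y1 ∈ Icc (f p) (f s), ∀ y2 ∈ Icc (f p) (f s),
      (aa * y2 + bb) / (cc * y2 + dd) - (aa * y1 + bb) / (cc * y1 + dd)
        = dl * (y2 - y1) / ((cc * y1 + dd) * (cc * y2 + dd)) := by
    intro y1 h1 y2 h2
    have n1 : cc * y1 + dd ≠ 0 := ne_of_lt (hDneg y1 h1)
    have n2 : cc * y2 + dd ≠ 0 := ne_of_lt (hDneg y2 h2)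
    rw [div_sub_div _ _ n2 n1, div_eq_div_iff (mul_ne_zero n2 n1) (mul_ne_zero n1 n2)]
    rw [haadef, hbbdef, hccdef, hdddef, hdldef]
    ring
  -- derivative of g
  have hC' : ContDiffOn ℝ 3 f (Ioo p s) := hC.mono Ioo_subset_Icc_self
  have hdf : ∀ x ∈ Ioo p s, HasDerivAt f (deriv f x) x := fun x hx =>
    ((hC'.differentiableOn (by norm_num)).differentiableAt
      (isOpen_Ioo.mem_nhds hx)).hasDerivAt
  set g1 : ℝ → ℝ := fun x => dl * deriv f x / (cc * f x + dd) ^ 2 with hg1def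
  have hgderiv : ∀ x ∈ Ioo p s, HasDerivAt g (g1 x) x := by
    intro x hx
    have hfx : f x ∈ Icc (f p) (f s) := hfmem x (Ioo_subset_Icc_self hx)
    have hD := hDneg _ hfx
    have hnum : HasDerivAt (fun y => aa * f y + bb) (aa * deriv f x) x :=
      ((hdf x hx).const_mul aa).add_const bb
    have hden : HasDerivAt (fun y => cc * f y + dd) (cc * deriv f x) x :=
      ((hdf x hx).const_mul cc).add_const dd
    have := hnum.div hden (ne_of_lt hD)
    refine this.congr_deriv (Eq.symm ?_)
    rw [hg1def]
    have hDne : cc * f x + dd ≠ 0 := ne_of_lt hD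
    field_simp
    rw [haadef, hbbdef, hccdef, hdddef, hdldef]
    ring
  have hgcont : ContinuousOn g (Icc p s) := by
    apply ContinuousOn.div
    · exact (continuousOn_const.mul hC.continuousOn).add continuousOn_const
    · exact (continuousOn_const.mul hC.continuousOn).add continuousOn_const
    · exact fun x hx => ne_of_lt (hDneg _ (hfmem x hx))
  -- the convex function
  set Hf : ℝ → ℝ := fun x => -(cc * f x + dd) / Real.sqrt (deriv f x) with hHdef
  have hu : ∀ x ∈ Ioo p s, 0 < -(cc * f x + dd) := by
    intro x hx
    have := hDneg _ (hfmem x (Ioo_subset_Icc_self hx))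
    linarith
  have hconv : ConvexOn ℝ (Ioo p s) Hf := convex_H f p s cc dd hC hpos hS hu
  have hHpos : ∀ x ∈ Ioo p s, 0 < Hf x := by
    intro x hx
    have h1 := hu x hx
    have h2 : 0 < Real.sqrt (deriv f x) :=
      Real.sqrt_pos.2 (hpos x (Ioo_subset_Icc_self hx))
    exact div_pos h1 h2
  have hHsq : ∀ x ∈ Ioo p s, (Hf x) ^ 2 * g1 x = dl := by
    intro x hx
    have hf1 := hpos x (Ioo_subset_Icc_self hx)
    have hs2 : Real.sqrt (deriv f x) ^ 2 = deriv f x := Real.sq_sqrt hf1.le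
    have hs0 : Real.sqrt (deriv f x) ≠ 0 := by positivity
    have hDne : cc * f x + dd ≠ 0 := ne_of_lt (hDneg _ (hfmem x (Ioo_subset_Icc_self hx)))
    rw [hHdef, hg1def]
    rw [div_pow, hs2]
    field_simp
  -- MVT: two points with derivative 1
  obtain ⟨ξ1, hξ1mem, hξ1⟩ := exists_hasDerivAt_eq_slope g g1 hpq
    (hgcont.mono (Icc_subset_Icc le_rfl hqs.le))
    (fun x hx => hgderiv x ⟨hx.1, hx.2.trans hqs⟩)
  obtain ⟨ξ2, hξ2mem, hξ2⟩ := exists_hasDerivAt_eq_slope g g1 hqs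
    (hgcont.mono (Icc_subset_Icc hpq.le le_rfl))
    (fun x hx => hgderiv x ⟨hpq.trans hx.1, hx.2⟩)
  have hξ1Ioo : ξ1 ∈ Ioo p s := ⟨hξ1mem.1, hξ1mem.2.trans hqs⟩
  have hξ2Ioo : ξ2 ∈ Ioo p s := ⟨hpq.trans hξ2mem.1, hξ2mem.2⟩
  have hg1ξ1 : g1 ξ1 = 1 := by
    rw [hξ1, hgq, hgp]
    exact div_self (by linarith)
  have hg1ξ2 : g1 ξ2 = 1 := by
    rw [hξ2, hgs, hgq]
    exact div_self (by linarith)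
  set sd : ℝ := Real.sqrt dl with hsddef
  have hsdpos : 0 < sd := Real.sqrt_pos.2 hdlpos
  have hsdsq : sd ^ 2 = dl := Real.sq_sqrt hdlpos.le
  have hHξ1 : Hf ξ1 = sd := by
    have h := hHsq ξ1 hξ1Ioo
    rw [hg1ξ1, mul_one] at h
    rw [hsddef, ← h, Real.sqrt_sq (hHpos ξ1 hξ1Ioo).le]
  have hHξ2 : Hf ξ2 = sd := by
    have h := hHsq ξ2 hξ2Ioo
    rw [hg1ξ2, mul_one] at h
    rw [hsddef, ← h, Real.sqrt_sq (hHpos ξ2 hξ2Ioo).le]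
  -- key: g r ≥ r
  have hgr_ge : r ≤ g r := by
    rcases le_or_gt r ξ2 with hcase | hcase
    · -- MVT on [q, r]
      obtain ⟨η, hηmem, hη⟩ := exists_hasDerivAt_eq_slope g g1 hqr
        (hgcont.mono (Icc_subset_Icc hpq.le hrs.le))
        (fun x hx => hgderiv x ⟨hpq.trans hx.1, hx.2.trans hrs⟩)
      have hηIoo : η ∈ Ioo p s := ⟨hpq.trans hηmem.1, (hηmem.2.trans_le hcase).trans hξ2mem.2⟩
      have hηseg : η ∈ Icc ξ1 ξ2 :=
        ⟨(hξ1mem.2.trans hηmem.1).le, (hηmem.2.trans_le hcase).le⟩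
      have hHη : Hf η ≤ sd := by
        have := hconv.le_on_segment hξ1Ioo hξ2Ioo
          ((segment_eq_Icc (hηseg.1.trans hηseg.2)) ▸ hηseg)
        rw [hHξ1, hHξ2, max_self] at this
        exact this
      have hg1η : 1 ≤ g1 η := aux_ge_one (hHsq η hηIoo) (hHpos η hηIoo) hHη hsdsq
      rw [hgq] at hη
      have : 1 ≤ (g r - q) / (r - q) := by rw [← hη]; exact hg1η
      rw [le_div_iff₀ (by linarith)] at this
      linarith
    · -- MVT on [r, s]
      obtain ⟨η, hηmem, hη⟩ := exists_hasDerivAt_eq_slope g g1 hrs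
        (hgcont.mono (Icc_subset_Icc hpr.le le_rfl))
        (fun x hx => hgderiv x ⟨hpr.trans hx.1, hx.2⟩)
      have hηIoo : η ∈ Ioo p s := ⟨hpr.trans hηmem.1, hηmem.2⟩
      have hξ2η : ξ2 < η := hcase.trans hηmem.1
      have hHη : sd ≤ Hf η :=
        aux_right_ge hconv hξ1Ioo hηIoo (hξ1mem.2.trans hξ2mem.1) hξ2η hHξ1 hHξ2
      have hg1η : g1 η ≤ 1 := aux_le_one (hHsq η hηIoo) (hHpos η hηIoo) hHη hsdpos hsdsq
      rw [hgs] at hη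
      have : (s - g r) / (s - r) ≤ 1 := by rw [← hη]; exact hg1η
      rw [div_le_one (by linarith)] at this
      linarith
  -- consequences of the Moebius difference identity
  have hXps : 0 < (cc * f p + dd) * (cc * f s + dd) := mul_pos_of_neg_of_neg hDp hDs
  have hXqr : 0 < (cc * f q + dd) * (cc * f r + dd) := mul_pos_of_neg_of_neg hDq hDr
  have hXpq : 0 < (cc * f p + dd) * (cc * f q + dd) := mul_pos_of_neg_of_neg hDp hDq
  have hXrs : 0 < (cc * f r + dd) * (cc * f s + dd) := mul_pos_of_neg_of_neg hDr hDs
  have d1 : s - p = dl * (f s - f p) / ((cc * f p + dd) * (cc * f s + dd)) := by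
    have h := hMdiff (f p) (hfmem p hpm) (f s) (hfmem s hsm)
    rw [show (aa * f s + bb) / (cc * f s + dd) = g s from rfl,
      show (aa * f p + bb) / (cc * f p + dd) = g p from rfl, hgs, hgp] at h
    exact h
  have d2 : g r - q = dl * (f r - f q) / ((cc * f q + dd) * (cc * f r + dd)) := by
    have h := hMdiff (f q) (hfmem q hqm) (f r) (hfmem r hrm)
    rw [show (aa * f r + bb) / (cc * f r + dd) = g r from rfl,
      show (aa * f q + bb) / (cc * f q + dd) = g q from rfl, hgq] at h
    exact h
  have d3 : q - p = dl * (f q - f p) / ((cc * f p + dd) * (cc * f q + dd)) := by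
    have h := hMdiff (f p) (hfmem p hpm) (f q) (hfmem q hqm)
    rw [show (aa * f q + bb) / (cc * f q + dd) = g q from rfl,
      show (aa * f p + bb) / (cc * f p + dd) = g p from rfl, hgq, hgp] at h
    exact h
  have d4 : s - g r = dl * (f s - f r) / ((cc * f r + dd) * (cc * f s + dd)) := by
    have h := hMdiff (f r) (hfmem r hrm) (f s) (hfmem s hsm)
    rw [show (aa * f s + bb) / (cc * f s + dd) = g s from rfl,
      show (aa * f r + bb) / (cc * f r + dd) = g r from rfl, hgs] at h
    exact h
  clear_value k cc dd aa bb dl g g1 Hf sd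
  have hgrq : q < g r := by
    have : 0 < g r - q := by
      rw [d2]
      exact div_pos (mul_pos hdlpos (by linarith)) hXqr
    linarith
  have hgrs : g r < s := by
    have : 0 < s - g r := by
      rw [d4]
      exact div_pos (mul_pos hdlpos (by linarith)) hXrs
    linarith
  -- solve for the f-differences
  have hdlne : dl ≠ 0 := ne_of_gt hdlpos
  have e1 : f s - f p = (s - p) * ((cc * f p + dd) * (cc * f s + dd)) / dl := by
    rw [eq_div_iff hdlne]
    rw [eq_div_iff (ne_of_gt hXps)] at d1
    linear_combination -d1
  have e2 : f r - f q = (g r - q) * ((cc * f q + dd) * (cc * f r + dd)) / dl := by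
    rw [eq_div_iff hdlne]
    rw [eq_div_iff (ne_of_gt hXqr)] at d2
    linear_combination -d2
  have e3 : f q - f p = (q - p) * ((cc * f p + dd) * (cc * f q + dd)) / dl := by
    rw [eq_div_iff hdlne]
    rw [eq_div_iff (ne_of_gt hXpq)] at d3
    linear_combination -d3
  have e4 : f s - f r = (s - g r) * ((cc * f r + dd) * (cc * f s + dd)) / dl := by
    rw [eq_div_iff hdlne]
    rw [eq_div_iff (ne_of_gt hXrs)] at d4
    linear_combination -d4
  have hne1 : s - p ≠ 0 := by linarith
  have hne2 : r - q ≠ 0 := by linarith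
  have hne3 : q - p ≠ 0 := by linarith
  have hne4 : s - g r ≠ 0 := by linarith
  have hne5 : s - r ≠ 0 := by linarith
  have hDpne : cc * f p + dd ≠ 0 := ne_of_lt hDp
  have hDqne : cc * f q + dd ≠ 0 := ne_of_lt hDq
  have hDrne : cc * f r + dd ≠ 0 := ne_of_lt hDr
  have hDsne : cc * f s + dd ≠ 0 := ne_of_lt hDs
  have main : ((f s - f p) * (f r - f q) * (q - p) * (s - r)) /
        ((s - p) * (r - q) * (f q - f p) * (f s - f r))
      = ((g r - q) * (s - r)) / ((r - q) * (s - g r)) :=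
    aux_main e1 e2 e3 e4 hdlne hDpne hDqne hDrne hDsne hne1 hne2 hne3 hne4
  rw [main]
  rw [le_div_iff₀ (mul_pos (by linarith : (0:ℝ) < r - q) (by linarith : (0:ℝ) < s - g r))]
  have hfin := aux_fin hgr_ge hqr hrs
  linarith
end
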